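/- The loop T_L satisfies the weak inverse property x·(y·x)⁻¹ = y⁻¹ and the anti-automorphic inverse property (x·y)⁻¹ = y⁻¹·x⁻¹, for all x, y ∈ T_L. -/

import Mathlib

/-- Iterated Cayley–Dickson doubling starting from `ℝ`. -/
def CD : ℕ → Type
  | 0 => ℝ
  | n + 1 => CD n × CD n

instance cdAddCommGroup : ∀ n, AddCommGroup (CD n)
  | 0 => inferInstanceAs (AddCommGroup ℝ)
  | n + 1 => letI := cdAddCommGroup n; inferInstanceAs (AddCommGroup (CD n × CD n))

noncomputable instance cdModule : ∀ n, Module ℝ (CD n)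
  | 0 => inferInstanceAs (Module ℝ ℝ)
  | n + 1 => letI := cdModule n; inferInstanceAs (Module ℝ (CD n × CD n))

/-- Cayley–Dickson conjugation, starting from the identity on `ℝ`. -/
def cdConj : ∀ n, CD n → CD n
  | 0, x => x
  | n + 1, x => (cdConj n x.1, -x.2)

/-- Cayley–Dickson multiplication: `(a,b)(c,d) = (ac − d b̄, ā d + c b)`. -/
def cdMul : ∀ n, CD n → CD n → CD n
  | 0, x, y => @Mul.mul ℝ _ x y
  | n + 1, x, y =>
      (cdMul n x.1 y.1 - cdMul n y.2 (cdConj n x.2),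
       cdMul n (cdConj n x.1) y.2 + cdMul n y.1 x.2)

instance cdMulInst (n : ℕ) : Mul (CD n) := ⟨cdMul n⟩

instance cdOne : ∀ n, One (CD n)
  | 0 => ⟨(1 : ℝ)⟩
  | n + 1 => letI := cdOne n; ⟨((1 : CD n), 0)⟩

/-- The standard basis elements: under a doubling step `A → A × A`, a basis element
`e k` of `A` gives `e k = (e k, 0)` and `e (k + dim A) = (0, e k)`. -/
def cdE : ∀ n, ℕ → CD n
  | 0, _ => (1 : ℝ)
  | n + 1, k => if k < 2 ^ n then (cdE n k, 0) else (0, cdE n (k - 2 ^ n))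

/-- The trigintaduonions: the 32-dimensional real Cayley–Dickson algebra. -/
abbrev TT := CD 5

/-- The 32 standard basis elements `e 0 = 1, e 1, …, e 31` of `𝕋`. -/
def e (i : ℕ) : TT := cdE 5 i

/-- The trigintaduonion loop `T_L = {±e 0, ±e 1, …, ±e 31}`. -/
def TL : Set TT := {x | ∃ i < 32, x = e i ∨ x = -e i}

/-- A subloop of `T_L`: a nonempty subset of `T_L` closed under multiplication. -/
def IsSubloop (N : Set TT) : Prop :=
  N ⊆ TL ∧ N.Nonempty ∧ ∀ x ∈ N, ∀ y ∈ N, x * y ∈ N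

/-- Two subsets of `T_L` are isomorphic (as loops) if some bijection between them
preserves multiplication. -/
def LoopIso (A B : Set TT) : Prop :=
  ∃ f : TT → TT, Set.BijOn f A B ∧ ∀ x ∈ A, ∀ y ∈ A, f (x * y) = f x * f y


lemma cd_conj_zero : ∀ n, cdConj n (0 : CD n) = 0
  | 0 => rfl
  | n+1 => by show ((cdConj n 0, -0) : CD n × CD n) = (0,0); simp [cd_conj_zero n]

lemma cd_conj_neg : ∀ n (x : CD n), cdConj n (-x) = -cdConj n x
  | 0, x => rfl
  | n+1, x => by
    show ((cdConj n (-x.1), -(-x.2)) : CD n × CD n) = (-cdConj n x.1, -(-x.2))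
    rw [cd_conj_neg n]

lemma cd_mul_zero' : ∀ n, (∀ x : CD n, cdMul n 0 x = 0) ∧ (∀ x : CD n, cdMul n x 0 = 0)
  | 0 => ⟨fun x => zero_mul (show ℝ from x), fun x => mul_zero (show ℝ from x)⟩
  | n+1 => by
    obtain ⟨hz, hz'⟩ := cd_mul_zero' n
    constructor
    · intro x
      show ((cdMul n 0 x.1 - cdMul n x.2 (cdConj n 0),
        cdMul n (cdConj n 0) x.2 + cdMul n x.1 0) : CD n × CD n) = (0,0)
      simp [hz, hz', cd_conj_zero n]
    · intro x
      show ((cdMul n x.1 0 - cdMul n 0 (cdConj n x.2),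
        cdMul n (cdConj n x.1) 0 + cdMul n 0 x.2) : CD n × CD n) = (0,0)
      simp [hz, hz']

lemma cd_mul_neg' : ∀ n, (∀ x y : CD n, cdMul n (-x) y = -cdMul n x y)
    ∧ (∀ x y : CD n, cdMul n x (-y) = -cdMul n x y)
  | 0 => ⟨fun x y => neg_mul (show ℝ from x) y, fun x y => mul_neg (show ℝ from x) y⟩
  | n+1 => by
    obtain ⟨hn, hn'⟩ := cd_mul_neg' n
    constructor
    · intro x y
      show ((cdMul n (-x.1) y.1 - cdMul n y.2 (cdConj n (-x.2)),
        cdMul n (cdConj n (-x.1)) y.2 + cdMul n y.1 (-x.2)) : CD n × CD n)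
        = (-(cdMul n x.1 y.1 - cdMul n y.2 (cdConj n x.2)),
           -(cdMul n (cdConj n x.1) y.2 + cdMul n y.1 x.2))
      rw [hn, cd_conj_neg n, hn', cd_conj_neg n, hn, hn', Prod.mk.injEq]
      constructor <;> abel
    · intro x y
      show ((cdMul n x.1 (-y.1) - cdMul n (-y.2) (cdConj n x.2),
        cdMul n (cdConj n x.1) (-y.2) + cdMul n (-y.1) x.2) : CD n × CD n)
        = (-(cdMul n x.1 y.1 - cdMul n y.2 (cdConj n x.2)),
           -(cdMul n (cdConj n x.1) y.2 + cdMul n y.1 x.2))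
      rw [hn', hn, hn', hn, Prod.mk.injEq]
      constructor <;> abel

/-- Sign of `e i * e j` (true = `+`). -/
def cdSign : ℕ → ℕ → ℕ → Bool
  | 0, _, _ => true
  | n+1, i, j =>
    if i < 2^n then
      if j < 2^n then cdSign n i j
      else if i = 0 then cdSign n i (j - 2^n) else !cdSign n i (j - 2^n)
    else
      if j < 2^n then cdSign n j (i - 2^n)
      else if i - 2^n = 0 then !cdSign n (j - 2^n) (i - 2^n) else cdSign n (j - 2^n) (i - 2^n)

/-- Index of `e i * e j`. -/
def cdIdx : ℕ → ℕ → ℕ → ℕ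
  | 0, _, _ => 0
  | n+1, i, j =>
    if i < 2^n then
      if j < 2^n then cdIdx n i j
      else cdIdx n i (j - 2^n) + 2^n
    else
      if j < 2^n then cdIdx n j (i - 2^n) + 2^n
      else cdIdx n (j - 2^n) (i - 2^n)

lemma cd_conj_e : ∀ n, ∀ i < 2^n, cdConj n (cdE n i) = if i = 0 then cdE n i else -(cdE n i)
  | 0, i, hi => by interval_cases i; rfl
  | n+1, i, hi => by
    by_cases h : i < 2^n
    · have e1 : cdE (n+1) i = ((cdE n i, 0) : CD n × CD n) := by rw [cdE]; exact if_pos h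
      rw [e1]
      show ((cdConj n (cdE n i), -0) : CD n × CD n) = _
      rw [cd_conj_e n i h]
      by_cases h0 : i = 0
      · simp [h0]
      · rw [if_neg h0]; refine Eq.trans ?_ (if_neg h0).symm
        show _ = ((-cdE n i, -0) : CD n × CD n)
        rw [neg_zero]
    · have h1 : (1:ℕ) ≤ 2^n := Nat.one_le_two_pow
      have hne : i ≠ 0 := by omega
      have e1 : cdE (n+1) i = ((0, cdE n (i - 2^n)) : CD n × CD n) := by rw [cdE]; exact if_neg h
      rw [e1]; refine Eq.trans ?_ (if_neg hne).symm
      show ((cdConj n 0, -(cdE n (i - 2^n))) : CD n × CD n)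
        = ((-0, -(cdE n (i - 2^n))) : CD n × CD n)
      rw [cd_conj_zero n, neg_zero]

lemma cd_idx_lt : ∀ n, ∀ i < 2^n, ∀ j < 2^n, cdIdx n i j < 2^n
  | 0, i, hi, j, hj => by simp [cdIdx]
  | n+1, i, hi, j, hj => by
    have h2 : (2:ℕ)^(n+1) = 2^n + 2^n := by ring
    rw [cdIdx]
    split_ifs with h h' h'
    · exact (cd_idx_lt n i h j h').trans (by omega)
    · have := cd_idx_lt n i h (j - 2^n) (by omega); omega
    · have := cd_idx_lt n j h' (i - 2^n) (by omega); omega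
    · have := cd_idx_lt n (j - 2^n) (by omega) (i - 2^n) (by omega); omega

lemma cd_neg_mk (n : ℕ) (a b : CD n) : (-((a, b) : CD (n+1))) = ((-a, -b) : CD n × CD n) := rfl

lemma cd_negl (n : ℕ) (x : CD n) : -((x, 0) : CD (n+1)) = ((-x, 0) : CD n × CD n) := by
  rw [cd_neg_mk, neg_zero]

lemma cd_negr (n : ℕ) (x : CD n) : -((0, x) : CD (n+1)) = ((0, -x) : CD n × CD n) := by
  rw [cd_neg_mk, neg_zero]

lemma cd_mul_e : ∀ n, ∀ i < 2^n, ∀ j < 2^n,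
    cdMul n (cdE n i) (cdE n j)
      = cond (cdSign n i j) (cdE n (cdIdx n i j)) (-cdE n (cdIdx n i j))
  | 0, i, hi, j, hj => mul_one (1 : ℝ)
  | n+1, i, hi, j, hj => by
    have h1 : (1:ℕ) ≤ 2^n := Nat.one_le_two_pow
    have h2 : (2:ℕ)^(n+1) = 2^n + 2^n := by ring
    obtain ⟨hz, hz'⟩ := cd_mul_zero' n
    obtain ⟨hneg, hneg'⟩ := cd_mul_neg' n
    by_cases h : i < 2^n <;> by_cases h' : j < 2^n
    · -- both low
      have hidx := cd_idx_lt n i h j h'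
      rw [show cdE (n+1) i = ((cdE n i, 0) : CD n × CD n) by rw [cdE]; exact if_pos h,
          show cdE (n+1) j = ((cdE n j, 0) : CD n × CD n) by rw [cdE]; exact if_pos h',
          show cdIdx (n+1) i j = cdIdx n i j by rw [cdIdx, if_pos h, if_pos h'],
          show cdSign (n+1) i j = cdSign n i j by rw [cdSign, if_pos h, if_pos h'],
          show cdE (n+1) (cdIdx n i j) = ((cdE n (cdIdx n i j), 0) : CD n × CD n) by
            rw [cdE]; exact if_pos hidx]
      show ((cdMul n (cdE n i) (cdE n j) - cdMul n 0 (cdConj n 0),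
        cdMul n (cdConj n (cdE n i)) 0 + cdMul n (cdE n j) 0) : CD n × CD n) = _
      rw [cd_conj_zero n, hz, hz', hz', cd_mul_e n i h j h']
      cases cdSign n i j
      all_goals (erw [cd_negl, sub_zero, add_zero]; try rfl)
    · -- i low, j high
      have hj' : j - 2^n < 2^n := by omega
      have hidx := cd_idx_lt n i h (j - 2^n) hj'
      rw [show cdE (n+1) i = ((cdE n i, 0) : CD n × CD n) by rw [cdE]; exact if_pos h,
          show cdE (n+1) j = ((0, cdE n (j - 2^n)) : CD n × CD n) by rw [cdE]; exact if_neg h',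
          show cdIdx (n+1) i j = cdIdx n i (j - 2^n) + 2^n by rw [cdIdx, if_pos h, if_neg h'],
          show cdE (n+1) (cdIdx n i (j - 2^n) + 2^n)
              = ((0, cdE n (cdIdx n i (j - 2^n))) : CD n × CD n) by
            rw [cdE]; refine (if_neg (by omega)).trans ?_; simp; rfl]
      show ((cdMul n (cdE n i) 0 - cdMul n (cdE n (j - 2^n)) (cdConj n 0),
        cdMul n (cdConj n (cdE n i)) (cdE n (j - 2^n)) + cdMul n 0 0) : CD n × CD n) = _
      rw [cd_conj_zero n, hz, hz', hz', cd_conj_e n i h,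
          show cdSign (n+1) i j = (if i = 0 then cdSign n i (j - 2^n) else !cdSign n i (j - 2^n))
            by rw [cdSign, if_pos h, if_neg h']]
      by_cases h0 : i = 0
      · rw [if_pos h0, if_pos h0, cd_mul_e n i h (j - 2^n) hj']
        cases cdSign n i (j - 2^n)
        all_goals (erw [cd_negr, sub_zero, add_zero]; try rfl)
      · rw [if_neg h0, if_neg h0, hneg, cd_mul_e n i h (j - 2^n) hj']
        cases cdSign n i (j - 2^n)
        all_goals (erw [cd_negr, sub_zero, add_zero])
        · have hh := congrArg (fun z => ((0, z) : CD n × CD n)) (neg_neg (cdE n (cdIdx n i (j - 2 ^ n)))); exact hh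
        · exact rfl
    · -- i high, j low
      have hi' : i - 2^n < 2^n := by omega
      have hidx := cd_idx_lt n j h' (i - 2^n) hi'
      rw [show cdE (n+1) i = ((0, cdE n (i - 2^n)) : CD n × CD n) by rw [cdE]; exact if_neg h,
          show cdE (n+1) j = ((cdE n j, 0) : CD n × CD n) by rw [cdE]; exact if_pos h',
          show cdIdx (n+1) i j = cdIdx n j (i - 2^n) + 2^n by rw [cdIdx, if_neg h, if_pos h'],
          show cdSign (n+1) i j = cdSign n j (i - 2^n) by rw [cdSign, if_neg h, if_pos h'],
          show cdE (n+1) (cdIdx n j (i - 2^n) + 2^n)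
              = ((0, cdE n (cdIdx n j (i - 2^n))) : CD n × CD n) by
            rw [cdE]; refine (if_neg (by omega)).trans ?_; simp; rfl]
      show ((cdMul n 0 (cdE n j) - cdMul n 0 (cdConj n (cdE n (i - 2^n))),
        cdMul n (cdConj n 0) 0 + cdMul n (cdE n j) (cdE n (i - 2^n))) : CD n × CD n) = _
      rw [cd_conj_zero n, hz, hz, hz', cd_mul_e n j h' (i - 2^n) hi']
      cases cdSign n j (i - 2^n)
      all_goals (erw [cd_negr, sub_zero, zero_add]; try rfl)
    · -- both high
      have hi' : i - 2^n < 2^n := by omega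
      have hj' : j - 2^n < 2^n := by omega
      have hidx := cd_idx_lt n (j - 2^n) hj' (i - 2^n) hi'
      rw [show cdE (n+1) i = ((0, cdE n (i - 2^n)) : CD n × CD n) by rw [cdE]; exact if_neg h,
          show cdE (n+1) j = ((0, cdE n (j - 2^n)) : CD n × CD n) by rw [cdE]; exact if_neg h',
          show cdIdx (n+1) i j = cdIdx n (j - 2^n) (i - 2^n) by
            rw [cdIdx, if_neg h, if_neg h'],
          show cdE (n+1) (cdIdx n (j - 2^n) (i - 2^n))
              = ((cdE n (cdIdx n (j - 2^n) (i - 2^n)), 0) : CD n × CD n) by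
            rw [cdE]; exact if_pos hidx,
          show cdSign (n+1) i j = (if i - 2^n = 0 then !cdSign n (j - 2^n) (i - 2^n)
              else cdSign n (j - 2^n) (i - 2^n)) by rw [cdSign, if_neg h, if_neg h']]
      show ((cdMul n 0 0 - cdMul n (cdE n (j - 2^n)) (cdConj n (cdE n (i - 2^n))),
        cdMul n (cdConj n 0) (cdE n (j - 2^n)) + cdMul n 0 (cdE n (i - 2^n))) : CD n × CD n) = _
      rw [cd_conj_zero n, hz, hz, hz, cd_conj_e n (i - 2^n) hi']
      by_cases h0 : i - 2^n = 0
      · rw [if_pos h0, if_pos h0, cd_mul_e n (j - 2^n) hj' (i - 2^n) hi']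
        cases cdSign n (j - 2^n) (i - 2^n)
        all_goals (erw [cd_negl, zero_sub, add_zero])
        · have hh := congrArg (fun z => ((z, 0) : CD n × CD n)) (neg_neg (cdE n (cdIdx n (j - 2 ^ n) (i - 2 ^ n)))); exact hh
        · exact rfl
      · rw [if_neg h0, if_neg h0, hneg', cd_mul_e n (j - 2^n) hj' (i - 2^n) hi']
        cases cdSign n (j - 2^n) (i - 2^n)
        all_goals (erw [cd_negl, zero_sub, neg_neg, add_zero]; try rfl)

/-- Signed basis element. -/
def S (b : Bool) (x : TT) : TT := cond b x (-x)

def cdIota (i : ℕ) : Bool := i = 0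

lemma S_mul (s t : Bool) (x y : TT) : S s x * S t y = S (s == t) (x * y) := by
  have h1 : ∀ a b : TT, (-a) * b = -(a * b) := (cd_mul_neg' 5).1
  have h2 : ∀ a b : TT, a * (-b) = -(a * b) := (cd_mul_neg' 5).2
  cases s <;> cases t <;> simp [S, h1, h2]

lemma S_S (a b : Bool) (x : TT) : S a (S b x) = S (a == b) x := by
  cases a <;> cases b <;> simp [S]

lemma p32 : (2:ℕ)^5 = 32 := by norm_num

lemma e_mul : ∀ a < 32, ∀ b < 32, e a * e b = S (cdSign 5 a b) (e (cdIdx 5 a b)) :=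
  fun a ha b hb => cd_mul_e 5 a (p32 ▸ ha) b (p32 ▸ hb)

lemma idx_lt : ∀ a < 32, ∀ b < 32, cdIdx 5 a b < 32 :=
  fun a ha b hb => p32 ▸ cd_idx_lt 5 a (p32 ▸ ha) b (p32 ▸ hb)

lemma hrecover : ∀ i < 32, ∀ j < 32, cdIdx 5 i (cdIdx 5 j i) = j := by decide

lemma hcommidx : ∀ i < 32, ∀ j < 32, cdIdx 5 i j = cdIdx 5 j i := by decide

lemma P1 : ∀ i < 32, ∀ j < 32, ∀ s t : Bool,
    ((s == (((t == s) == cdSign 5 j i) == cdIota (cdIdx 5 j i))) == cdSign 5 i (cdIdx 5 j i))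
      = (t == cdIota j) := by decide

lemma P2 : ∀ i < 32, ∀ j < 32, ∀ s t : Bool,
    (((s == t) == cdSign 5 i j) == cdIota (cdIdx 5 i j))
      = (((t == cdIota j) == (s == cdIota i)) == cdSign 5 j i) := by decide


/-- `T_L` satisfies the weak inverse property `x·(y·x)⁻¹ = y⁻¹` and the
anti-automorphic inverse property `(x·y)⁻¹ = y⁻¹·x⁻¹`, where `e 0⁻¹ = e 0`,
`(-e 0)⁻¹ = -e 0`, and `(±e i)⁻¹ = ∓e i` for `1 ≤ i ≤ 31`. -/
theorem stmt15 (inv : TT → TT)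
    (h0 : inv (e 0) = e 0) (h0' : inv (-e 0) = -e 0)
    (hi : ∀ i, 1 ≤ i → i ≤ 31 → inv (e i) = -e i ∧ inv (-e i) = e i) :
    ∀ x ∈ TL, ∀ y ∈ TL, x * inv (y * x) = inv y ∧ inv (x * y) = inv y * inv x := by
  have inv_S : ∀ i < 32, ∀ b, inv (S b (e i)) = S (b == cdIota i) (e i) := by
    intro i hi32 b
    by_cases h' : i = 0
    · subst h'; cases b <;> simp [S, cdIota, h0, h0']
    · obtain ⟨hA, hB⟩ := hi i (by omega) (by omega)
      cases b <;> simp [S, cdIota, h', hA, hB]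
  rintro x ⟨i, hi32, hx⟩ y ⟨j, hj32, hy⟩
  obtain ⟨s, rfl⟩ : ∃ s, x = S s (e i) := by
    rcases hx with h | h
    exacts [⟨true, h⟩, ⟨false, h⟩]
  obtain ⟨t, rfl⟩ : ∃ t, y = S t (e j) := by
    rcases hy with h | h
    exacts [⟨true, h⟩, ⟨false, h⟩]
  have hk : cdIdx 5 j i < 32 := idx_lt j hj32 i hi32
  constructor
  · rw [S_mul, e_mul j hj32 i hi32, S_S, inv_S _ hk, S_mul, e_mul i hi32 _ hk, S_S,
        hrecover i hi32 j hj32, inv_S j hj32, P1 i hi32 j hj32 s t]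
  · rw [S_mul, e_mul i hi32 j hj32, S_S, inv_S _ (idx_lt i hi32 j hj32),
        inv_S j hj32, inv_S i hi32, S_mul, e_mul j hj32 i hi32, S_S,
        P2 i hi32 j hj32 s t, hcommidx i hi32 j hj32]
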